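/- Let k ∈ ℂ with k ∉ {−2, −3} and set τ = 2/(k+3). Let V carry a smooth sl₂-current representation of level k+1 with Sugawara operators L^S_n, together with a family of operators L^V_n (n ∈ ℤ) satisfying the Virasoro relations [L^V_m, L^V_n] = (m − n) L^V_{m+n} + ((m³−m)/12) δ_{m+n,0} c · Id for some c ∈ ℂ and commuting with all currents: [L^V_m, X(n)] = 0 for all X ∈ sl₂(ℂ) and m, n ∈ ℤ. Set L_n = L^V_n + L^S_n. Suppose v ∈ V satisfies X(n)v = 0 for all n ≥ 0 and all X ∈ sl₂(ℂ). Then for every κ ∈ ℂ, (−2 L_{−2} + (κ/2) L_{−1}² + (τ/2) Σ_{a=1}^{3} X_a(−1)²) v = (−2 L^V_{−2} + (κ/2) (L^V_{−1})²) v; in particular, if additionally (−2 L^V_{−2} + (κ/2)(L^V_{−1})²) v = 0, then the total drift operator −2 L_{−2} + (κ/2) L_{−1}² + (τ/2) Σ_{a=1}^{3} X_a(−1)² annihilates v. -/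
import Mathlib


open LieAlgebra.SpecialLinear

noncomputable section

/-- The standard basis element `E` of sl₂(ℂ). -/
def matE : ↥(sl (Fin 2) ℂ) :=
  ⟨!![0, 1; 0, 0], by show _ ∈ LinearMap.ker (Matrix.traceLinearMap (Fin 2) ℂ ℂ); simp [Matrix.trace_fin_two]⟩

/-- The standard basis element `H` of sl₂(ℂ). -/
def matH : ↥(sl (Fin 2) ℂ) :=
  ⟨!![1, 0; 0, -1], by show _ ∈ LinearMap.ker (Matrix.traceLinearMap (Fin 2) ℂ ℂ); simp [Matrix.trace_fin_two]⟩

/-- The standard basis element `F` of sl₂(ℂ). -/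
def matF : ↥(sl (Fin 2) ℂ) :=
  ⟨!![0, 0; 1, 0], by show _ ∈ LinearMap.ker (Matrix.traceLinearMap (Fin 2) ℂ ℂ); simp [Matrix.trace_fin_two]⟩

/-- The invariant bilinear form `(X|Y) = Tr(XY)` on sl₂(ℂ). -/
def trForm (A B : ↥(sl (Fin 2) ℂ)) : ℂ :=
  Matrix.trace ((A : Matrix (Fin 2) (Fin 2) ℂ) * (B : Matrix (Fin 2) (Fin 2) ℂ))

/-- A smooth sl₂-current representation of level `k` on a complex vector space `V`:
operators `cur X n` for `X ∈ sl₂(ℂ)`, `n ∈ ℤ`, linear in `X`, satisfying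
`[X(m), Y(n)] = [X,Y](m+n) + m (X|Y) δ_{m+n,0} k·Id`, and smooth (every vector is
annihilated by all currents of sufficiently large mode). -/
structure SmoothCurrentRep (k : ℂ) (V : Type*) [AddCommGroup V] [Module ℂ V] where
  cur : ↥(sl (Fin 2) ℂ) → ℤ → Module.End ℂ V
  cur_add : ∀ (A B : ↥(sl (Fin 2) ℂ)) (n : ℤ), cur (A + B) n = cur A n + cur B n
  cur_smul : ∀ (c : ℂ) (A : ↥(sl (Fin 2) ℂ)) (n : ℤ), cur (c • A) n = c • cur A n
  commutator : ∀ (A B : ↥(sl (Fin 2) ℂ)) (m n : ℤ),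
    ⁅cur A m, cur B n⁆ = cur ⁅A, B⁆ (m + n)
      + (if m + n = 0 then (m : ℂ) * trForm A B * k else 0) • (1 : Module.End ℂ V)
  smooth : ∀ v : V, ∃ N : ℤ, ∀ (A : ↥(sl (Fin 2) ℂ)) (n : ℤ), N ≤ n → cur A n v = 0

/-- The orthonormal basis `X₁ = H/√2`, `X₂ = (E+F)/√2`, `X₃ = i(E−F)/√2`
of sl₂(ℂ) with respect to the trace form. -/
def onb : Fin 3 → ↥(sl (Fin 2) ℂ) :=
  ![((Real.sqrt 2 : ℂ))⁻¹ • matH,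
    ((Real.sqrt 2 : ℂ))⁻¹ • (matE + matF),
    (Complex.I * ((Real.sqrt 2 : ℂ))⁻¹) • (matE - matF)]

/-- The normal-ordered product `:X(m) X(l):` of two current operators. -/
def nOrd {V : Type*} [AddCommGroup V] [Module ℂ V]
    (cur : ↥(sl (Fin 2) ℂ) → ℤ → Module.End ℂ V)
    (A : ↥(sl (Fin 2) ℂ)) (m l : ℤ) : Module.End ℂ V :=
  if m < 0 then cur A m * cur A l else cur A l * cur A m

/-- `L` is the family of Sugawara operators of a level-`k` current family `cur`:
`L n = (1/(2(k+2))) Σ_{a=1}^{3} Σ_{m∈ℤ} :X_a(m) X_a(n−m):`, where for each vector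
the (finitely supported) sum over `m ∈ ℤ` is taken as a `finsum`. -/
def IsSugawara {V : Type*} [AddCommGroup V] [Module ℂ V] (k : ℂ)
    (cur : ↥(sl (Fin 2) ℂ) → ℤ → Module.End ℂ V) (L : ℤ → Module.End ℂ V) : Prop :=
  ∀ (n : ℤ) (v : V),
    L n v = (2 * (k + 2))⁻¹ • ∑ᶠ m : ℤ, (∑ a : Fin 3, nOrd cur (onb a) m (n - m)) v

/-!
STATEMENT 10: Let `k ∉ {−2, −3}`, `τ = 2/(k+3)`.  Let `V` carry a smooth
sl₂-current representation of level `k+1` with Sugawara operators `L^S n`,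
together with operators `L^V n` satisfying the Virasoro relations with some
central charge `c` and commuting with all currents.  Set `L n = L^V n + L^S n`.
If `v ∈ V` satisfies `X(n) v = 0` for all `n ≥ 0`, then for every `κ`,
`(−2 L₋₂ + (κ/2) L₋₁² + (τ/2) Σ_a X_a(−1)²) v = (−2 L^V₋₂ + (κ/2)(L^V₋₁)²) v`;
in particular if `(−2 L^V₋₂ + (κ/2)(L^V₋₁)²) v = 0`, the total drift operator
annihilates `v`.
-/


lemma sug_apply_neg {k : ℂ} {V : Type*} [AddCommGroup V] [Module ℂ V]
    (R : SmoothCurrentRep (k + 1) V) (LS : ℤ → Module.End ℂ V)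
    (hLS : IsSugawara (k + 1) R.cur LS)
    (w : V) (hw : ∀ (A : ↥(sl (Fin 2) ℂ)) (n : ℤ), 0 ≤ n → R.cur A n w = 0) :
    LS (-1) w = 0 ∧
    LS (-2) w = (2 * (k + 3))⁻¹ •
      ∑ a : Fin 3, R.cur (onb a) (-1) (R.cur (onb a) (-1) w) := by
  have key : ∀ (n m : ℤ), m ≤ n ∨ 0 ≤ m →
      (∑ a : Fin 3, nOrd R.cur (onb a) m (n - m)) w = 0 := by
    intro n m hm
    rw [LinearMap.sum_apply]
    apply Finset.sum_eq_zero
    intro a _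
    rcases hm with hm | hm
    · rcases lt_or_ge m 0 with h | h
      · rw [nOrd, if_pos h, Module.End.mul_apply, hw _ _ (by omega), map_zero]
      · rw [nOrd, if_neg (not_lt.2 h), Module.End.mul_apply, hw _ _ h, map_zero]
    · rw [nOrd, if_neg (not_lt.2 hm), Module.End.mul_apply, hw _ _ hm, map_zero]
  constructor
  · rw [hLS (-1) w]
    have : ∀ m : ℤ, (∑ a : Fin 3, nOrd R.cur (onb a) m (-1 - m)) w = 0 := by
      intro m; exact key (-1) m (by omega)
    rw [finsum_congr this, finsum_zero, smul_zero]
  · rw [hLS (-2) w]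
    have hk : (k + 1 + 2) = k + 3 := by ring
    rw [hk]
    congr 1
    rw [finsum_eq_single _ (-1 : ℤ) (fun m hm => key (-2) m (by omega))]
    have hm : ((-2 : ℤ) - (-1)) = -1 := by norm_num
    rw [LinearMap.sum_apply]
    apply Finset.sum_congr rfl
    intro a _
    rw [nOrd, if_pos (by norm_num : (-1 : ℤ) < 0), hm, Module.End.mul_apply]

theorem coset_drift_cancellation
    (k : ℂ) (hk2 : k ≠ -2) (hk3 : k ≠ -3) (τ : ℂ) (hτ : τ = 2 / (k + 3))
    (V : Type*) [AddCommGroup V] [Module ℂ V]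
    (R : SmoothCurrentRep (k + 1) V)
    (LS : ℤ → Module.End ℂ V) (hLS : IsSugawara (k + 1) R.cur LS)
    (LV : ℤ → Module.End ℂ V) (c : ℂ)
    (hVir : ∀ m n : ℤ, ⁅LV m, LV n⁆ = ((m : ℂ) - (n : ℂ)) • LV (m + n)
      + (if m + n = 0 then (((m : ℂ) ^ 3 - (m : ℂ)) / 12) * c else 0) • (1 : Module.End ℂ V))
    (hcomm : ∀ (A : ↥(sl (Fin 2) ℂ)) (m n : ℤ), ⁅LV m, R.cur A n⁆ = 0)
    (L : ℤ → Module.End ℂ V) (hL : ∀ n : ℤ, L n = LV n + LS n)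
    (v : V) (hv : ∀ (A : ↥(sl (Fin 2) ℂ)) (n : ℤ), 0 ≤ n → R.cur A n v = 0) :
    ∀ κ : ℂ,
      ((-2 : ℂ) • L (-2) v + (κ / 2) • L (-1) (L (-1) v)
          + (τ / 2) • ∑ a : Fin 3, R.cur (onb a) (-1) (R.cur (onb a) (-1) v)
        = (-2 : ℂ) • LV (-2) v + (κ / 2) • LV (-1) (LV (-1) v)) ∧
      ((-2 : ℂ) • LV (-2) v + (κ / 2) • LV (-1) (LV (-1) v) = 0 →
        (-2 : ℂ) • L (-2) v + (κ / 2) • L (-1) (L (-1) v)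
          + (τ / 2) • ∑ a : Fin 3, R.cur (onb a) (-1) (R.cur (onb a) (-1) v) = 0) := by
  intro κ
  have hk3' : (k : ℂ) + 3 ≠ 0 := fun h => hk3 (by linear_combination h)
  set S : V := ∑ a : Fin 3, R.cur (onb a) (-1) (R.cur (onb a) (-1) v) with hS
  obtain ⟨h1, h2⟩ := sug_apply_neg R LS hLS v hv
  -- LV (-1) v is also annihilated by nonnegative currents
  have hv' : ∀ (A : ↥(sl (Fin 2) ℂ)) (n : ℤ), 0 ≤ n → R.cur A n (LV (-1) v) = 0 := by
    intro A n hn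
    have := hcomm A (-1) n
    rw [Ring.lie_def, sub_eq_zero] at this
    have happ := congrArg (fun f : Module.End ℂ V => f v) this
    simp only [Module.End.mul_apply] at happ
    rw [← happ, hv A n hn, map_zero]
  obtain ⟨h1', _⟩ := sug_apply_neg R LS hLS (LV (-1) v) hv'
  have eL2 : L (-2) v = LV (-2) v + (2 * (k + 3))⁻¹ • S := by
    rw [hL, LinearMap.add_apply, h2]
  have eL1 : L (-1) v = LV (-1) v := by
    rw [hL, LinearMap.add_apply, h1, add_zero]
  have eL11 : L (-1) (L (-1) v) = LV (-1) (LV (-1) v) := by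
    rw [eL1, hL, LinearMap.add_apply, h1', add_zero]
  have main : (-2 : ℂ) • L (-2) v + (κ / 2) • L (-1) (L (-1) v)
      + (τ / 2) • S = (-2 : ℂ) • LV (-2) v + (κ / 2) • LV (-1) (LV (-1) v) := by
    rw [eL2, eL11, smul_add, smul_smul]
    have hc : (-2 : ℂ) * (2 * (k + 3))⁻¹ + τ / 2 = 0 := by
      rw [hτ]
      field_simp
      ring
    have : ((-2 : ℂ) * (2 * (k + 3))⁻¹) • S + (τ / 2) • S = 0 := by
      rw [← add_smul, hc, zero_smul]
    linear_combination (norm := module) this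
  exact ⟨main, fun h0 => main.trans h0⟩


end
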